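/- Let p be a prime and m = p^f > 2 a power of p. Then for every α in the ring of integers Z[ζ_m] of Q(ζ_m) that lies outside the unique prime ideal of Z[ζ_m] above p, the absolute norm satisfies N_{Q(ζ_m)/Q}(α) ≡ 1 (mod m). -/

import Mathlib

open NumberField

set_option maxHeartbeats 1000000
set_option synthInstance.maxHeartbeats 400000

/-- The norm of a prime ideal coprime to `p` is `≡ 1 mod m`, since the residue field
contains a primitive `m`-th root of unity. -/
lemma aux_key (p : ℕ) (hp : p.Prime) (m : ℕ+) (f : ℕ) (hm : (m : ℕ) = p ^ f)
    [NeZero ((m : ℕ) : ℚ)] [NumberField (CyclotomicField m ℚ)]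
    (Q : Ideal (𝓞 (CyclotomicField m ℚ))) (hQ : Q.IsPrime) (hQb : Q ≠ ⊥)
    (hpQ : (p : 𝓞 (CyclotomicField m ℚ)) ∉ Q) :
    ((Ideal.absNorm Q : ℤ)) ≡ 1 [ZMOD ((m : ℕ) : ℤ)] := by
  haveI : IsCyclotomicExtension {(m : ℕ)} ℚ (CyclotomicField m ℚ) :=
    CyclotomicField.isCyclotomicExtension _ _
  have hζ := IsCyclotomicExtension.zeta_spec m ℚ (CyclotomicField m ℚ)
  have hζO := hζ.toInteger_isPrimitiveRoot
  haveI : Q.IsMaximal := Ideal.IsPrime.isMaximal hQ hQb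
  letI : Field (𝓞 (CyclotomicField m ℚ) ⧸ Q) := Ideal.Quotient.field Q
  letI : Fintype (𝓞 (CyclotomicField m ℚ) ⧸ Q) := @Fintype.ofFinite _ (Ideal.finiteQuotientOfFreeOfNeBot Q hQb)
  have hpF : (p : 𝓞 (CyclotomicField m ℚ) ⧸ Q) ≠ 0 := by
    rw [← map_natCast (Ideal.Quotient.mk Q) p, Ne, Ideal.Quotient.eq_zero_iff_mem]
    exact hpQ
  haveI : NeZero ((m : ℕ) : 𝓞 (CyclotomicField m ℚ) ⧸ Q) := by
    refine ⟨?_⟩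
    rw [show ((m : ℕ) : 𝓞 (CyclotomicField m ℚ) ⧸ Q) = ((p ^ f : ℕ) : 𝓞 (CyclotomicField m ℚ) ⧸ Q) from
      congrArg Nat.cast hm]
    push_cast
    exact pow_ne_zero _ hpF
  have hroot : Polynomial.IsRoot
      (Polynomial.cyclotomic m (𝓞 (CyclotomicField m ℚ) ⧸ Q))
      (Ideal.Quotient.mk Q hζ.toInteger) := by
    have h1 := (hζO.isRoot_cyclotomic m.pos).map (f := Ideal.Quotient.mk Q)
    rwa [Polynomial.map_cyclotomic] at h1
  have hz : IsPrimitiveRoot (Ideal.Quotient.mk Q hζ.toInteger) (m : ℕ) :=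
    Polynomial.isRoot_cyclotomic_iff.mp hroot
  have hz0 : (Ideal.Quotient.mk Q hζ.toInteger) ≠ 0 := by
    intro h0
    have h := hz.pow_eq_one
    rw [h0, zero_pow (by exact_mod_cast m.ne_zero : (m : ℕ) ≠ 0)] at h
    exact zero_ne_one h
  have hpow := FiniteField.pow_card_sub_one_eq_one (Ideal.Quotient.mk Q hζ.toInteger) hz0
  have hdvd : (m : ℕ) ∣ Fintype.card (𝓞 (CyclotomicField m ℚ) ⧸ Q) - 1 :=
    hz.dvd_of_pow_eq_one _ hpow
  have hcard : Ideal.absNorm Q = Fintype.card (𝓞 (CyclotomicField m ℚ) ⧸ Q) := by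
    rw [Ideal.absNorm_apply, Submodule.cardQuot_apply, Nat.card_eq_fintype_card]
  have hcard1 : 1 ≤ Fintype.card (𝓞 (CyclotomicField m ℚ) ⧸ Q) := Fintype.card_pos
  obtain ⟨k, hk⟩ := hdvd
  have hcardeq : Fintype.card (𝓞 (CyclotomicField m ℚ) ⧸ Q) = (m : ℕ) * k + 1 := by
    rw [← hk, Nat.sub_add_cancel hcard1]
  rw [hcard, hcardeq]
  refine Int.ModEq.symm (Int.modEq_iff_dvd.mpr ⟨(k : ℤ), by push_cast; ring⟩)

/-- Norms from a totally complex field (here a cyclotomic field with `m > 2`) are positive. -/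
lemma aux_pos (m : ℕ+) (hm2 : 2 < (m : ℕ))
    [NeZero ((m : ℕ) : ℚ)] [NumberField (CyclotomicField m ℚ)]
    (x : CyclotomicField m ℚ) (hx : x ≠ 0) :
    0 < Algebra.norm ℚ x := by
  haveI : IsCyclotomicExtension {(m : ℕ)} ℚ (CyclotomicField m ℚ) :=
    CyclotomicField.isCyclotomicExtension _ _
  have hζ := IsCyclotomicExtension.zeta_spec m ℚ (CyclotomicField m ℚ)
  have hnorm := Algebra.norm_eq_prod_embeddings (K := ℚ) (L := CyclotomicField m ℚ) (E := ℂ) x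
  set c : ℂ →ₐ[ℚ] ℂ := (Complex.conjAe.toAlgHom.restrictScalars ℚ) with hc
  have hcapp : ∀ w : ℂ, c w = (starRingEnd ℂ) w := fun w => rfl
  set g : (CyclotomicField m ℚ →ₐ[ℚ] ℂ) → (CyclotomicField m ℚ →ₐ[ℚ] ℂ) :=
    fun σ => c.comp σ with hg
  have hgg : ∀ σ, g (g σ) = σ := by
    intro σ
    ext y
    simp [hg, hcapp]
  have hgne : ∀ σ, g σ ≠ σ := by
    intro σ hgσ
    have hζσ : IsPrimitiveRoot (σ (IsCyclotomicExtension.zeta m ℚ (CyclotomicField m ℚ))) (m : ℕ) :=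
      hζ.map_of_injective (σ.toRingHom.injective)
    have hconj : (starRingEnd ℂ) (σ (IsCyclotomicExtension.zeta m ℚ (CyclotomicField m ℚ))) =
        σ (IsCyclotomicExtension.zeta m ℚ (CyclotomicField m ℚ)) := by
      have h := congrArg
        (fun τ : CyclotomicField m ℚ →ₐ[ℚ] ℂ =>
          τ (IsCyclotomicExtension.zeta m ℚ (CyclotomicField m ℚ))) hgσ
      simpa [hg, hcapp] using h
    set w := σ (IsCyclotomicExtension.zeta m ℚ (CyclotomicField m ℚ))
    have him : w = ((w.re : ℝ) : ℂ) := (Complex.conj_eq_iff_re.mp hconj).symm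
    have hw1 : w ^ (m : ℕ) = 1 := hζσ.pow_eq_one
    have hre : (w.re : ℝ) ^ (m : ℕ) = 1 := by
      have : (((w.re : ℝ) : ℂ)) ^ (m : ℕ) = 1 := by rw [← him]; exact hw1
      exact_mod_cast this
    have hcases := (pow_eq_one_iff_of_ne_zero
      (by exact_mod_cast m.ne_zero : (m : ℕ) ≠ 0)).mp hre
    have hw : w = 1 ∨ w = -1 := by
      rcases hcases with h | ⟨h, _⟩
      · left; rw [him, h]; norm_num
      · right; rw [him, h]; norm_num
    have hdvd2 : (m : ℕ) ∣ 2 := by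
      rcases hw with h | h
      · exact dvd_trans (hζσ.dvd_of_pow_eq_one 1 (by rw [h, pow_one])) ⟨2, rfl⟩
      · exact hζσ.dvd_of_pow_eq_one 2 (by rw [h]; ring)
    have := Nat.le_of_dvd (by norm_num) hdvd2
    omega
  have hx0 : ∀ σ : CyclotomicField m ℚ →ₐ[ℚ] ℂ, σ x ≠ 0 := by
    intro σ h0
    exact hx (by
      have := σ.toRingHom.injective (a₁ := x) (a₂ := 0) (by simpa using h0)
      simpa using this)
  set A : (CyclotomicField m ℚ →ₐ[ℚ] ℂ) → ℝ := fun σ => ‖σ x‖ with hA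
  have hA0 : ∀ σ, (A σ : ℂ) ≠ 0 := by
    intro σ
    simp only [hA, Ne, Complex.ofReal_eq_zero]
    exact (norm_ne_zero_iff.mpr (hx0 σ))
  set u : (CyclotomicField m ℚ →ₐ[ℚ] ℂ) → ℂ := fun σ => σ x / (A σ : ℂ) with hu
  have hAg : ∀ σ, A (g σ) = A σ := by
    intro σ
    simp [hA, hg, hcapp, Complex.norm_conj]
  have hprod_u : ∏ σ : CyclotomicField m ℚ →ₐ[ℚ] ℂ, u σ = 1 := by
    refine Finset.prod_ninvolution g ?_ ?_ ?_ hgg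
    · intro σ
      have hmc : (σ x) * ((starRingEnd ℂ) (σ x)) = (A σ : ℂ) * (A σ : ℂ) := by
        rw [Complex.mul_conj]
        rw [hA]
        norm_cast
        rw [Complex.normSq_eq_norm_sq]
        ring
      have heq : u σ * u (g σ) = ((σ x) * ((starRingEnd ℂ) (σ x))) / ((A σ : ℂ) * (A σ : ℂ)) := by
        rw [hu]
        simp only [hAg]
        rw [div_mul_div_comm]
        congr 1
      rw [heq, hmc, div_self (mul_ne_zero (hA0 σ) (hA0 σ))]
    · intro σ _
      exact hgne σ
    · intro σ; exact Finset.mem_univ _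
  have hsplit : ∏ σ : CyclotomicField m ℚ →ₐ[ℚ] ℂ, σ x =
      ((∏ σ : CyclotomicField m ℚ →ₐ[ℚ] ℂ, A σ : ℝ) : ℂ) := by
    have h1 : ∀ σ : CyclotomicField m ℚ →ₐ[ℚ] ℂ, σ x = u σ * (A σ : ℂ) := by
      intro σ
      rw [hu]
      exact (div_mul_cancel₀ _ (hA0 σ)).symm
    calc ∏ σ : CyclotomicField m ℚ →ₐ[ℚ] ℂ, σ x
        = ∏ σ : CyclotomicField m ℚ →ₐ[ℚ] ℂ, (u σ * (A σ : ℂ)) :=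
          Finset.prod_congr rfl (fun σ _ => h1 σ)
      _ = (∏ σ : CyclotomicField m ℚ →ₐ[ℚ] ℂ, u σ) *
            ∏ σ : CyclotomicField m ℚ →ₐ[ℚ] ℂ, (A σ : ℂ) := Finset.prod_mul_distrib
      _ = ∏ σ : CyclotomicField m ℚ →ₐ[ℚ] ℂ, (A σ : ℂ) := by rw [hprod_u, one_mul]
      _ = ((∏ σ : CyclotomicField m ℚ →ₐ[ℚ] ℂ, A σ : ℝ) : ℂ) := by push_cast; rfl
  have hApos : 0 < ∏ σ : CyclotomicField m ℚ →ₐ[ℚ] ℂ, A σ := by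
    refine Finset.prod_pos ?_
    intro σ _
    exact norm_pos_iff.mpr (hx0 σ)
  have hfinal : ((Algebra.norm ℚ x : ℚ) : ℂ) =
      ((∏ σ : CyclotomicField m ℚ →ₐ[ℚ] ℂ, A σ : ℝ) : ℂ) := by
    rw [← hsplit, ← hnorm]
    simp [eq_ratCast]
  have hreal : ((Algebra.norm ℚ x : ℚ) : ℝ) = ∏ σ : CyclotomicField m ℚ →ₐ[ℚ] ℂ, A σ := by
    have h2 := hfinal
    rw [show ((Algebra.norm ℚ x : ℚ) : ℂ) = (((Algebra.norm ℚ x : ℚ) : ℝ) : ℂ) by push_cast; rfl]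
      at h2
    exact_mod_cast h2
  have h3 : (0 : ℝ) < ((Algebra.norm ℚ x : ℚ) : ℝ) := hreal ▸ hApos
  exact_mod_cast h3

theorem stmt_6 (p : ℕ) (hp : p.Prime) (m : ℕ+) (f : ℕ) (hm : (m : ℕ) = p ^ f)
    (hm2 : 2 < (m : ℕ))
    (α : 𝓞 (CyclotomicField m ℚ))
    (hα : ∀ Q : Ideal (𝓞 (CyclotomicField m ℚ)), Q.IsPrime →
      (p : 𝓞 (CyclotomicField m ℚ)) ∈ Q → α ∉ Q) :
    ∃ a : ℤ,
      Algebra.norm ℚ (algebraMap (𝓞 (CyclotomicField m ℚ)) (CyclotomicField m ℚ) α) = (a : ℚ) ∧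
      a ≡ 1 [ZMOD ((m : ℕ) : ℤ)] := by
  haveI : NeZero ((m : ℕ) : ℚ) := ⟨Nat.cast_ne_zero.mpr m.ne_zero⟩
  haveI : NumberField (CyclotomicField m ℚ) := @IsCyclotomicExtension.numberField {(m : ℕ)} ℚ _ _ _ _ _ _
    (CyclotomicField.isCyclotomicExtension _ _)
  -- α is nonzero
  have hα0 : α ≠ 0 := by
    intro h
    have hnu : ¬ IsUnit ((p : 𝓞 (CyclotomicField m ℚ))) := by
      intro hu
      have h1 : IsUnit (Algebra.norm ℤ ((p : 𝓞 (CyclotomicField m ℚ)))) :=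
        IsUnit.map (@Algebra.norm ℤ (𝓞 (CyclotomicField m ℚ)) _ _ _) hu
      have h2 : Algebra.norm ℤ ((p : 𝓞 (CyclotomicField m ℚ))) =
          (p : ℤ) ^ Module.finrank ℤ (𝓞 (CyclotomicField m ℚ)) := by
        let b := Module.Free.chooseBasis ℤ (𝓞 (CyclotomicField m ℚ))
        rw [show ((p : 𝓞 (CyclotomicField m ℚ))) =
          algebraMap ℤ (𝓞 (CyclotomicField m ℚ)) (p : ℤ) by push_cast; rfl,
          Algebra.norm_algebraMap_of_basis b, Module.finrank_eq_card_chooseBasisIndex]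
      rw [h2] at h1
      have h3 := Int.isUnit_iff.mp h1
      have hfr : Module.finrank ℤ (𝓞 (CyclotomicField m ℚ)) ≠ 0 := by
        have : 0 < Module.finrank ℤ (𝓞 (CyclotomicField m ℚ)) := Module.finrank_pos
        omega
      rcases h3 with h4 | h4
      · have h5 : ((p ^ Module.finrank ℤ (𝓞 (CyclotomicField m ℚ)) : ℕ) : ℤ) = 1 := by
          push_cast
          exact h4
        have h6 : p ^ Module.finrank ℤ (𝓞 (CyclotomicField m ℚ)) = 1 := by exact_mod_cast h5
        have h7 : 1 < p ^ Module.finrank ℤ (𝓞 (CyclotomicField m ℚ)) :=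
          Nat.one_lt_pow hfr hp.one_lt
        omega
      · have : (0 : ℤ) ≤ (p : ℤ) ^ Module.finrank ℤ (𝓞 (CyclotomicField m ℚ)) := by positivity
        omega
    have hI : Ideal.span {(p : 𝓞 (CyclotomicField m ℚ))} ≠ ⊤ := by
      rw [Ne, Ideal.span_singleton_eq_top]
      exact hnu
    obtain ⟨Q, hQmax, hle⟩ := Ideal.exists_le_maximal _ hI
    exact hα Q hQmax.isPrime (hle (Ideal.mem_span_singleton_self _)) (h ▸ Q.zero_mem)
  -- the congruence for divisors of the principal ideal generated by α
  have main : ∀ J : Ideal (𝓞 (CyclotomicField m ℚ)), J ∣ Ideal.span {α} →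
      ((Ideal.absNorm J : ℤ)) ≡ 1 [ZMOD ((m : ℕ) : ℤ)] := by
    intro J
    refine UniqueFactorizationMonoid.induction_on_prime
      (P := fun J : Ideal (𝓞 (CyclotomicField m ℚ)) => J ∣ Ideal.span {α} →
        ((Ideal.absNorm J : ℤ)) ≡ 1 [ZMOD ((m : ℕ) : ℤ)]) J ?_ ?_ ?_
    · intro h0
      exfalso
      have := zero_dvd_iff.mp h0
      exact hα0 (Ideal.span_singleton_eq_bot.mp this)
    · intro x hx _
      rw [Ideal.isUnit_iff.mp hx, Ideal.absNorm_top]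
      rfl
    · intro a P ha hP IH hdvd
      have hPd : P ∣ Ideal.span {α} := dvd_trans ⟨a, rfl⟩ hdvd
      have had : a ∣ Ideal.span {α} := dvd_trans ⟨P, mul_comm P a⟩ hdvd
      have hPle : Ideal.span {α} ≤ P := Ideal.le_of_dvd hPd
      have hαP : α ∈ P := hPle (Ideal.mem_span_singleton_self _)
      have hPprime : P.IsPrime := Ideal.isPrime_of_prime hP
      have hpP : (p : 𝓞 (CyclotomicField m ℚ)) ∉ P := fun hc => hα P hPprime hc hαP
      have h1 := aux_key p hp m f hm P hPprime hP.ne_zero hpP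
      have h2 := IH had
      have h3 : Ideal.absNorm (P * a) = Ideal.absNorm P * Ideal.absNorm a :=
        map_mul Ideal.absNorm P a
      rw [h3]
      push_cast
      simpa using h1.mul h2
  have h1 : Algebra.norm ℚ (algebraMap (𝓞 (CyclotomicField m ℚ)) (CyclotomicField m ℚ) α) =
      ((Algebra.norm ℤ α : ℤ) : ℚ) := by
    rw [Algebra.coe_norm_int]
  have hx : algebraMap (𝓞 (CyclotomicField m ℚ)) (CyclotomicField m ℚ) α ≠ 0 := by
    intro h
    exact hα0 (RingOfIntegers.coe_injective (by simpa using h))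
  have hpos : (0 : ℚ) < ((Algebra.norm ℤ α : ℤ) : ℚ) := h1 ▸ aux_pos m hm2 _ hx
  have hapos : 0 < Algebra.norm ℤ α := by exact_mod_cast hpos
  have h3 : (Algebra.norm ℤ α).natAbs = Ideal.absNorm (Ideal.span {α}) :=
    (Ideal.absNorm_span_singleton α).symm
  have h4 := main _ dvd_rfl
  refine ⟨Algebra.norm ℤ α, h1, ?_⟩
  have h5 : Algebra.norm ℤ α = ((Algebra.norm ℤ α).natAbs : ℤ) :=
    (Int.natAbs_of_nonneg hapos.le).symm
  rw [h5, h3]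
  exact h4
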